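/- The direct product ℤ × ⟨x₁, x₂ | (x₁x₂)² = (x₂x₁)²⟩, where the second factor is the presented group with single relator (x₁x₂)²·((x₂x₁)²)⁻¹, is big, i.e. it contains a subgroup which is free of rank 2. Likewise ℤ² × ⟨x₁, x₂ | (x₁x₂)² = (x₂x₁)² = e⟩ is big. -/

import Mathlib

namespace Stmt16

/-- A group `G` is big if it contains a free subgroup of rank 2, i.e. there is an
injective group homomorphism from the free group on two generators into `G`. -/
def Big (G : Type*) [Group G] : Prop :=
  ∃ f : FreeGroup (Fin 2) →* G, Function.Injective f

/-- The single relator `(x₁x₂)²((x₂x₁)²)⁻¹` of `⟨x₁, x₂ | (x₁x₂)² = (x₂x₁)²⟩`. -/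
def rels₁ : Set (FreeGroup (Fin 2)) :=
  {(FreeGroup.of 0 * FreeGroup.of 1) ^ 2 * ((FreeGroup.of 1 * FreeGroup.of 0) ^ 2)⁻¹}

/-- The relators `(x₁x₂)²`, `(x₂x₁)²` of `⟨x₁, x₂ | (x₁x₂)² = (x₂x₁)² = e⟩`. -/
def rels₂ : Set (FreeGroup (Fin 2)) :=
  {(FreeGroup.of 0 * FreeGroup.of 1) ^ 2, (FreeGroup.of 1 * FreeGroup.of 0) ^ 2}

/-! ### Auxiliary setup -/

/-- The natural action of `Equiv.Perm (Fin 2)` on `FreeGroup (Fin 2)` by renaming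
generators, as a homomorphism into the automorphism group. -/
def permAut : Equiv.Perm (Fin 2) →* MulAut (FreeGroup (Fin 2)) where
  toFun σ := FreeGroup.freeGroupCongr σ
  map_one' := FreeGroup.freeGroupCongr_refl
  map_mul' σ τ := (FreeGroup.freeGroupCongr_trans τ σ).symm

/-- The target group: `F₂ ⋊ Perm(Fin 2)`. -/
abbrev H := SemidirectProduct (FreeGroup (Fin 2)) (Equiv.Perm (Fin 2)) permAut

/-- The involution swapping the two generators. -/
def j : H := SemidirectProduct.inr (Equiv.swap 0 1)

/-- The first free generator, inside `H`. -/
def h₀ : H := SemidirectProduct.inl (FreeGroup.of 0)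

lemma j_mul_j : j * j = 1 := by
  rw [j, ← map_mul, Equiv.swap_mul_self, map_one]

lemma j_inv : j⁻¹ = j := by
  rw [inv_eq_iff_mul_eq_one, j_mul_j]

/-- Images of the two generators of the presented groups in `H`. -/
def f : Fin 2 → H := ![h₀, h₀⁻¹ * j]

lemma f01 : f 0 * f 1 = j := by
  simp [f]

lemma f10_sq : (f 1 * f 0) ^ 2 = 1 := by
  have : f 1 * f 0 = h₀⁻¹ * j * h₀ := by simp [f]
  rw [this, sq,
    show h₀⁻¹ * j * h₀ * (h₀⁻¹ * j * h₀) = h₀⁻¹ * (j * j) * h₀ by simp [mul_assoc],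
    j_mul_j, mul_one, inv_mul_cancel]

lemma f01_sq : (f 0 * f 1) ^ 2 = 1 := by
  rw [f01, sq, j_mul_j]

lemma lift_f_rels₁ : ∀ r ∈ rels₁, FreeGroup.lift f r = 1 := by
  intro r hr
  rw [rels₁, Set.mem_singleton_iff] at hr
  subst hr
  simp only [map_mul, map_pow, map_inv, FreeGroup.lift_apply_of]
  rw [f01_sq, f10_sq]
  simp

lemma lift_f_rels₂ : ∀ r ∈ rels₂, FreeGroup.lift f r = 1 := by
  intro r hr
  rw [rels₂] at hr
  rcases hr with hr | hr <;> subst hr <;>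
    simp only [map_mul, map_pow, FreeGroup.lift_apply_of]
  · exact f01_sq
  · exact f10_sq

lemma j_h₀_j : j * h₀ * j = SemidirectProduct.inl (FreeGroup.of 1) := by
  have h := SemidirectProduct.inl_aut (φ := permAut) (Equiv.swap 0 1) (FreeGroup.of 0)
  have hswap : permAut (Equiv.swap 0 1) (FreeGroup.of 0) = FreeGroup.of 1 := by
    simp [permAut]
  rw [hswap, Equiv.swap_inv] at h
  rw [j, h₀]
  exact h.symm

/-- Images of the two free generators in the presented group: `x₁` and `(x₁x₂)x₁(x₁x₂)`. -/
def w (rels : Set (FreeGroup (Fin 2))) : Fin 2 → PresentedGroup rels :=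
  ![PresentedGroup.of 0,
    (PresentedGroup.of 0 * PresentedGroup.of 1) * PresentedGroup.of 0 *
      (PresentedGroup.of 0 * PresentedGroup.of 1)]

/-- Generic injectivity: for any set of relators killed by `f`, the map `F₂ → PresentedGroup rels`
sending the generators to `x₁` and `(x₁x₂)x₁(x₁x₂)` is injective. -/
lemma big_of_rels {rels : Set (FreeGroup (Fin 2))}
    (hrels : ∀ r ∈ rels, FreeGroup.lift f r = 1) : Big (PresentedGroup rels) := by
  refine ⟨FreeGroup.lift (w rels), ?_⟩
  have key : (PresentedGroup.toGroup hrels).comp (FreeGroup.lift (w rels)) =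
      SemidirectProduct.inl := by
    apply FreeGroup.ext_hom
    intro a
    have e0 : (PresentedGroup.toGroup hrels) (w rels 0) = f 0 := by
      simp only [w, Matrix.cons_val_zero]
      exact PresentedGroup.toGroup.of hrels
    have e1 : (PresentedGroup.toGroup hrels) (w rels 1) = SemidirectProduct.inl (FreeGroup.of 1) := by
      simp only [w, Matrix.cons_val_one, Matrix.head_cons, map_mul,
        PresentedGroup.toGroup.of]
      show (f 0 * f 1) * f 0 * (f 0 * f 1) = _
      rw [f01]
      exact j_h₀_j
    fin_cases a
    · simp only [MonoidHom.comp_apply, FreeGroup.lift_apply_of]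
      exact e0
    · simp only [MonoidHom.comp_apply, FreeGroup.lift_apply_of]
      exact e1
  have hinj : Function.Injective
      ((PresentedGroup.toGroup hrels).comp (FreeGroup.lift (w rels))) := by
    rw [key]
    exact SemidirectProduct.inl_injective
  exact Function.Injective.of_comp hinj

lemma big_prod {A G : Type*} [Group A] [Group G] (h : Big G) : Big (A × G) := by
  obtain ⟨ψ, hψ⟩ := h
  refine ⟨(MonoidHom.inr A G).comp ψ, fun a b hab => hψ ?_⟩
  simpa using congrArg Prod.snd hab

/-- `ℤ × ⟨x₁, x₂ | (x₁x₂)² = (x₂x₁)²⟩` and `ℤ² × ⟨x₁, x₂ | (x₁x₂)² = (x₂x₁)² = e⟩`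
are big. -/
theorem products_big :
    Big (Multiplicative ℤ × PresentedGroup rels₁) ∧
      Big (Multiplicative (ℤ × ℤ) × PresentedGroup rels₂) := by
  exact ⟨big_prod (big_of_rels lift_f_rels₁), big_prod (big_of_rels lift_f_rels₂)⟩

end Stmt16
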